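/- For every complex number z with Re(z) > 0 and z ≠ 1, one has ∫_0^∞ u^{z-1}/(1 + e^u) du = (1 - 2^{1-z})·Γ(z)·ζ(z). -/

import Mathlib

open Complex MeasureTheory

namespace EtaAux

open Set Filter Asymptotics

noncomputable def F : ℝ → ℂ := fun t => ((1 + Real.exp t : ℝ) : ℂ)⁻¹

lemma hasSum_F {t : ℝ} (ht : t ∈ Set.Ioi (0 : ℝ)) :
    HasSum (fun n : ℕ => (-1 : ℂ) ^ n * Real.exp (-((n : ℝ) + 1) * t)) (F t) := by
  have ht' : (0 : ℝ) < t := ht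
  have hreal : HasSum (fun n : ℕ => (-1 : ℝ) ^ n * Real.exp (-((n : ℝ) + 1) * t))
      ((1 + Real.exp t)⁻¹) := by
    have hr : ‖(-Real.exp (-t))‖ < 1 := by
      rw [norm_neg, Real.norm_eq_abs, abs_of_pos (Real.exp_pos _)]
      exact Real.exp_lt_one_iff.mpr (by linarith)
    have hgeom := (hasSum_geometric_of_norm_lt_one hr).mul_left (Real.exp (-t))
    have h1 : ∀ n : ℕ, Real.exp (-t) * (-Real.exp (-t)) ^ n
        = (-1 : ℝ) ^ n * Real.exp (-((n : ℝ) + 1) * t) := by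
      intro n
      have h4 : Real.exp (-t) * (-Real.exp (-t)) ^ n
          = (-1 : ℝ) ^ n * (Real.exp (-t) * Real.exp ((n : ℕ) * (-t))) := by
        rw [neg_pow, Real.exp_nat_mul]; ring
      rw [h4, ← Real.exp_add, show -t + (n : ℝ) * (-t) = -((n : ℝ) + 1) * t by ring]
    have h2 : Real.exp (-t) * (1 - -Real.exp (-t))⁻¹ = (1 + Real.exp t)⁻¹ := by
      rw [sub_neg_eq_add, Real.exp_neg]
      have h3 : (0 : ℝ) < Real.exp t := Real.exp_pos t
      field_simp
      ring
    rw [h2] at hgeom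
    exact hgeom.congr_fun fun n => (h1 n).symm
  have hC := hreal.mapL Complex.ofRealCLM
  have hFt : F t = Complex.ofRealCLM ((1 + Real.exp t)⁻¹) := by
    simp [F]
  rw [hFt]
  refine hC.congr_fun fun n => ?_
  simp only [ofRealCLM_apply]
  push_cast
  ring

lemma summable_aux {x : ℝ} (hx : 1 < x) :
    Summable fun n : ℕ => 1 / ((n : ℝ) + 1) ^ x := by
  have h := (Real.summable_one_div_nat_rpow (p := x)).mpr hx
  have h2 := (summable_nat_add_iff (f := fun n : ℕ => 1 / (n : ℝ) ^ x) 1).mpr h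
  refine h2.congr fun n => ?_
  push_cast
  ring_nf

lemma hasSum_zeta {z : ℂ} (hz : 1 < z.re) :
    HasSum (fun n : ℕ => 1 / ((n : ℂ) + 1) ^ z) (riemannZeta z) := by
  have hsum : Summable fun n : ℕ => 1 / ((n : ℂ) + 1) ^ z := by
    apply Summable.of_norm
    have hn : ∀ n : ℕ, ‖1 / ((n : ℂ) + 1) ^ z‖ = 1 / ((n : ℝ) + 1) ^ z.re := by
      intro n
      rw [norm_div, norm_one]
      congr 1
      rw [show ((n : ℂ) + 1) = (((n : ℝ) + 1 : ℝ) : ℂ) by push_cast; ring,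
        Complex.norm_cpow_eq_rpow_re_of_pos (by positivity)]
    exact (summable_aux hz).congr fun n => (hn n).symm
  have h := hsum.hasSum
  rwa [← zeta_eq_tsum_one_div_nat_add_one_cpow hz] at h

set_option maxHeartbeats 1000000 in
lemma mellin_F_eq {z : ℂ} (hz : 1 < z.re) :
    mellin F z = (1 - (2 : ℂ) ^ (1 - z)) * Complex.Gamma z * riemannZeta z := by
  have h0 : 0 < z.re := lt_trans one_pos hz
  have h2z : (2 : ℂ) ^ z ≠ 0 := by
    intro h
    rw [Complex.cpow_eq_zero_iff] at h
    exact two_ne_zero h.1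
  have hsumnorm : Summable fun n : ℕ => ‖(-1 : ℂ) ^ n‖ / ((n : ℝ) + 1) ^ z.re := by
    refine (summable_aux hz).congr fun n => ?_
    simp
  have key0 := hasSum_mellin (a := fun n : ℕ => (-1 : ℂ) ^ n) (p := fun n : ℕ => (n : ℝ) + 1)
    (F := F) (s := z) (fun n : ℕ => Or.inr n.cast_add_one_pos) h0
    (fun t ht => hasSum_F ht) hsumnorm
  have key : HasSum (fun n : ℕ => Complex.Gamma z * (-1 : ℂ) ^ n / ((n : ℂ) + 1) ^ z)
      (mellin F z) := by
    refine key0.congr_fun fun n => ?_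
    push_cast
    ring
  have hg : HasSum (fun n : ℕ => Complex.Gamma z * (1 / ((n : ℂ) + 1) ^ z))
      (Complex.Gamma z * riemannZeta z) := (hasSum_zeta hz).mul_left _
  have hodd : HasSum (fun n : ℕ => (1 - (-1 : ℂ) ^ n) * Complex.Gamma z / ((n : ℂ) + 1) ^ z)
      ((2 : ℂ) ^ (1 - z) * (Complex.Gamma z * riemannZeta z)) := by
    have hinj : Function.Injective (fun m : ℕ => 2 * m + 1) := by
      intro a b h
      have h' : 2 * a + 1 = 2 * b + 1 := h
      omega
    have hvan : ∀ x : ℕ, x ∉ Set.range (fun m : ℕ => 2 * m + 1) →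
        (1 - (-1 : ℂ) ^ x) * Complex.Gamma z / ((x : ℂ) + 1) ^ z = 0 := by
      intro x hx
      have hev : Even x := by
        rcases Nat.even_or_odd x with h | h
        · exact h
        · exfalso; obtain ⟨m, hm⟩ := h; exact hx ⟨m, show 2 * m + 1 = x by omega⟩
      rw [hev.neg_one_pow]
      ring
    rw [← hinj.hasSum_iff hvan]
    have base := (hasSum_zeta hz).mul_left ((2 : ℂ) ^ (1 - z) * Complex.Gamma z)
    rw [mul_assoc] at base
    refine base.congr_fun fun m => ?_
    simp only [Function.comp_apply]
    have hpow : (-1 : ℂ) ^ (2 * m + 1) = -1 := Odd.neg_one_pow ⟨m, by ring⟩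
    rw [hpow]
    have hc : ((2 * m + 1 : ℕ) : ℂ) + 1
        = (Complex.ofReal 2) * (Complex.ofReal ((m : ℝ) + 1)) := by
      push_cast; ring
    rw [hc, Complex.mul_cpow_ofReal_nonneg (by norm_num) (by positivity)]
    have h1z : (2 : ℂ) ^ (1 - z) = 2 / (2 : ℂ) ^ z := by
      rw [Complex.cpow_sub _ _ two_ne_zero, Complex.cpow_one]
    have hb : (Complex.ofReal ((m : ℝ) + 1)) ≠ 0 := by
      rw [Complex.ofReal_ne_zero]; positivity
    have hne : (Complex.ofReal ((m : ℝ) + 1)) ^ z ≠ 0 := by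
      intro h
      rw [Complex.cpow_eq_zero_iff] at h
      exact hb h.1
    rw [h1z]
    push_cast
    field_simp
    ring
  have hsub := hg.sub hodd
  have hterm : ∀ n : ℕ,
      Complex.Gamma z * (1 / ((n : ℂ) + 1) ^ z)
        - (1 - (-1 : ℂ) ^ n) * Complex.Gamma z / ((n : ℂ) + 1) ^ z
      = Complex.Gamma z * (-1 : ℂ) ^ n / ((n : ℂ) + 1) ^ z := by
    intro n
    ring
  rw [show Complex.Gamma z * riemannZeta z
      - (2 : ℂ) ^ (1 - z) * (Complex.Gamma z * riemannZeta z)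
      = (1 - (2 : ℂ) ^ (1 - z)) * Complex.Gamma z * riemannZeta z by ring] at hsub
  exact key.unique (hsub.congr_fun fun n => (hterm n).symm)

end EtaAux

/-- For `Re z > 0`, `z ≠ 1`:
`∫_0^∞ u^{z-1}/(1+e^u) du = (1 - 2^{1-z}) Γ(z) ζ(z)`. -/
theorem integral_eq_eta_Gamma_zeta (z : ℂ) (hz : 0 < z.re) (hz1 : z ≠ 1) :
    ∫ u in Set.Ioi (0 : ℝ), (u : ℂ) ^ (z - 1) / (1 + Real.exp u)
      = (1 - (2 : ℂ) ^ (1 - z)) * Complex.Gamma z * riemannZeta z := by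
  open Set Filter Asymptotics EtaAux in
  have hFeq : (∫ u in Set.Ioi (0 : ℝ), (u : ℂ) ^ (z - 1) / (1 + Real.exp u))
      = mellin EtaAux.F z := by
    rw [mellin]
    refine (setIntegral_congr_fun measurableSet_Ioi fun t ht => ?_).symm
    simp only [EtaAux.F, smul_eq_mul, div_eq_mul_inv]
    push_cast
    ring
  rw [hFeq]
  -- set up identity theorem
  set U : Set ℂ := {s : ℂ | 0 < s.re} ∩ {(1 : ℂ)}ᶜ with hU
  have hUo : IsOpen U :=
    ((isOpen_lt continuous_const Complex.continuous_re).inter isOpen_compl_singleton)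
  have hcont : Continuous EtaAux.F := by
    refine Continuous.inv₀ (Complex.continuous_ofReal.comp
      (continuous_const.add Real.continuous_exp)) fun t => ?_
    simp only [Function.comp_apply, ne_eq, Complex.ofReal_eq_zero]
    positivity
  have hFc : MeasureTheory.LocallyIntegrableOn EtaAux.F (Set.Ioi (0 : ℝ)) :=
    hcont.locallyIntegrable.locallyIntegrableOn _
  have hFtop : EtaAux.F =O[Filter.atTop] fun t : ℝ => Real.exp (-1 * t) := by
    refine Asymptotics.isBigO_of_le _ fun t => ?_
    have h1 : (0 : ℝ) < 1 + Real.exp t := by positivity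
    rw [EtaAux.F, norm_inv, Complex.norm_real, Real.norm_eq_abs, abs_of_pos h1,
      Real.norm_eq_abs, abs_of_pos (Real.exp_pos _), neg_one_mul, Real.exp_neg]
    refine inv_anti₀ (Real.exp_pos t) (by linarith)
  have hFbot : EtaAux.F =O[nhdsWithin (0 : ℝ) (Set.Ioi 0)] fun t : ℝ => t ^ (-(0 : ℝ)) := by
    refine Asymptotics.IsBigO.of_bound 1 ?_
    filter_upwards [self_mem_nhdsWithin] with t (ht : (0 : ℝ) < t)
    have h1 : (1 : ℝ) ≤ 1 + Real.exp t := by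
      have := Real.exp_pos t; linarith
    rw [EtaAux.F, norm_inv, Complex.norm_real, Real.norm_eq_abs,
      abs_of_pos (by linarith : (0:ℝ) < 1 + Real.exp t)]
    have h2 : ‖t ^ (-(0 : ℝ))‖ = 1 := by rw [neg_zero, Real.rpow_zero, norm_one]
    rw [h2, mul_one]
    exact inv_le_one_of_one_le₀ h1
  have hf : AnalyticOnNhd ℂ (mellin EtaAux.F) U := by
    refine DifferentiableOn.analyticOnNhd (fun s hs => ?_) hUo
    exact (mellin_differentiableAt_of_isBigO_rpow_exp (a := 1) one_pos hFc hFtop hFbot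
      hs.1).differentiableWithinAt
  have hg : AnalyticOnNhd ℂ
      (fun s => (1 - (2 : ℂ) ^ (1 - s)) * Complex.Gamma s * riemannZeta s) U := by
    refine DifferentiableOn.analyticOnNhd (fun s hs => ?_) hUo
    have d1 : DifferentiableAt ℂ (fun s : ℂ => 1 - (2 : ℂ) ^ (1 - s)) s := by
      refine (differentiableAt_const _).sub ?_
      exact DifferentiableAt.const_cpow ((differentiableAt_const _).sub differentiableAt_id)
        (Or.inl two_ne_zero)
    have d2 : DifferentiableAt ℂ Complex.Gamma s := by
      refine Complex.differentiableAt_Gamma _ fun m => ?_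
      intro h
      have h2 : s.re = -(m : ℝ) := by rw [h]; simp
      have h3 : (0 : ℝ) < s.re := hs.1
      rw [h2] at h3
      have : (0 : ℝ) ≤ (m : ℝ) := Nat.cast_nonneg m
      linarith
    have d3 : DifferentiableAt ℂ riemannZeta s := differentiableAt_riemannZeta hs.2
    exact ((d1.mul d2).mul d3).differentiableWithinAt
  -- preconnectedness of U
  have hUc : IsPreconnected U := by
    have hA : Convex ℝ ({s : ℂ | 0 < s.re} ∩ {s : ℂ | 0 < s.im}) :=
      (convex_halfSpace_re_gt 0).inter (convex_halfSpace_im_gt 0)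
    have hB : Convex ℝ ({s : ℂ | 0 < s.re} ∩ {s : ℂ | s.re < 1}) :=
      (convex_halfSpace_re_gt 0).inter (convex_halfSpace_re_lt 1)
    have hC : Convex ℝ ({s : ℂ | 0 < s.re} ∩ {s : ℂ | s.im < 0}) :=
      (convex_halfSpace_re_gt 0).inter (convex_halfSpace_im_lt 0)
    have hD : Convex ℝ {s : ℂ | 1 < s.re} := convex_halfSpace_re_gt 1
    have hx1A : (1 / 2 + (1 / 2) * Complex.I : ℂ) ∈ {s : ℂ | 0 < s.re} ∩ {s : ℂ | 0 < s.im} := by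
      constructor <;> norm_num [Complex.add_re, Complex.add_im]
    have hx1B : (1 / 2 + (1 / 2) * Complex.I : ℂ) ∈ {s : ℂ | 0 < s.re} ∩ {s : ℂ | s.re < 1} := by
      constructor <;> norm_num [Complex.add_re, Complex.add_im]
    have hx2C : (2 - Complex.I : ℂ) ∈ {s : ℂ | 0 < s.re} ∩ {s : ℂ | s.im < 0} := by
      constructor <;> norm_num [Complex.sub_re, Complex.sub_im]
    have hx2D : (2 - Complex.I : ℂ) ∈ {s : ℂ | 1 < s.re} := by
      norm_num [Complex.sub_re]
    have hx3B : (1 / 2 - Complex.I : ℂ) ∈ {s : ℂ | 0 < s.re} ∩ {s : ℂ | s.re < 1} := by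
      constructor <;> norm_num [Complex.sub_re, Complex.sub_im]
    have hx3C : (1 / 2 - Complex.I : ℂ) ∈ {s : ℂ | 0 < s.re} ∩ {s : ℂ | s.im < 0} := by
      constructor <;> norm_num [Complex.sub_re, Complex.sub_im]
    have hS1 := IsPreconnected.union _ hx1A hx1B hA.isPreconnected hB.isPreconnected
    have hS2 := IsPreconnected.union _ hx2C hx2D hC.isPreconnected hD.isPreconnected
    have hS := IsPreconnected.union (1 / 2 - Complex.I : ℂ) (Or.inr hx3B) (Or.inl hx3C) hS1 hS2
    have hUeq : U = (({s : ℂ | 0 < s.re} ∩ {s : ℂ | 0 < s.im})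
        ∪ ({s : ℂ | 0 < s.re} ∩ {s : ℂ | s.re < 1}))
        ∪ (({s : ℂ | 0 < s.re} ∩ {s : ℂ | s.im < 0}) ∪ {s : ℂ | 1 < s.re}) := by
      apply Set.eq_of_subset_of_subset
      · rintro s ⟨hs0, hs1⟩
        have hs1' : s ≠ 1 := hs1
        simp only [Set.mem_union, Set.mem_inter_iff, Set.mem_setOf_eq]
        rcases lt_trichotomy s.im 0 with h | h | h
        · exact Or.inr (Or.inl ⟨hs0, h⟩)
        · have hre : s.re ≠ 1 := by
            intro hre
            exact hs1' (Complex.ext (by simp [hre]) (by simp [h]))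
          rcases hre.lt_or_gt with h2 | h2
          · exact Or.inl (Or.inr ⟨hs0, h2⟩)
          · exact Or.inr (Or.inr h2)
        · exact Or.inl (Or.inl ⟨hs0, h⟩)
      · rintro s ((⟨h1, h2⟩ | ⟨h1, h2⟩) | (⟨h1, h2⟩ | h1))
        · exact ⟨h1, fun hs => by rw [Set.mem_singleton_iff] at hs; rw [hs] at h2; simp at h2⟩
        · exact ⟨h1, fun hs => by
            rw [Set.mem_singleton_iff] at hs; rw [hs] at h2; simp at h2⟩
        · exact ⟨h1, fun hs => by rw [Set.mem_singleton_iff] at hs; rw [hs] at h2; simp at h2⟩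
        · refine ⟨by simp only [Set.mem_setOf_eq] at h1 ⊢; linarith, fun hs => by
            rw [Set.mem_singleton_iff] at hs; rw [hs] at h1; simp at h1⟩
    rw [hUeq]
    exact hS
  have h2U : (2 : ℂ) ∈ U := by
    constructor
    · show (0 : ℝ) < (2 : ℂ).re; norm_num
    · simp only [Set.mem_compl_iff, Set.mem_singleton_iff]
      norm_num
  have hzU : z ∈ U := ⟨hz, by simpa using hz1⟩
  have hev : (mellin EtaAux.F) =ᶠ[nhds (2 : ℂ)]
      (fun s => (1 - (2 : ℂ) ^ (1 - s)) * Complex.Gamma s * riemannZeta s) := by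
    have hV : {s : ℂ | 1 < s.re} ∈ nhds (2 : ℂ) := by
      refine (isOpen_lt continuous_const Complex.continuous_re).mem_nhds ?_
      show (1 : ℝ) < (2 : ℂ).re; norm_num
    filter_upwards [hV] with s hs
    exact EtaAux.mellin_F_eq hs
  exact hf.eqOn_of_preconnected_of_eventuallyEq hg hUc h2U hev hzU
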